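/- Let N ≥ 2 and let U be a unitary on ℂ^N ⊗ ℂ^N. Then 0 ≤ g_t(U) ≤ 2, and g_t(U) = 0 if and only if U is a local gate, i.e., there exist unitaries A, B on ℂ^N such that U = A ⊗ B. -/

import Mathlib

open Matrix MeasureTheory
open scoped Kronecker

noncomputable section

instance {m n R : Type*} [TopologicalSpace R] : MeasurableSpace (Matrix m n R) := borel _
instance {m n R : Type*} [TopologicalSpace R] : BorelSpace (Matrix m n R) := ⟨rfl⟩

/-- Reshuffling: `(U_R)_{(i,j),(α,β)} = U_{(i,α),(j,β)}`. -/
def reshuffle (N : ℕ) (U : Matrix (Fin N × Fin N) (Fin N × Fin N) ℂ) :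
    Matrix (Fin N × Fin N) (Fin N × Fin N) ℂ :=
  Matrix.of fun p q => U (p.1, q.1) (p.2, q.2)

/-- Partial transpose: `(U_Γ)_{(j,α),(i,β)} = U_{(i,α),(j,β)}`. -/
def ptransp (N : ℕ) (U : Matrix (Fin N × Fin N) (Fin N × Fin N) ℂ) :
    Matrix (Fin N × Fin N) (Fin N × Fin N) ℂ :=
  Matrix.of fun p q => U (q.1, p.2) (p.1, q.2)

/-- The swap gate `S(x ⊗ y) = y ⊗ x`. -/
def swapGate (N : ℕ) : Matrix (Fin N × Fin N) (Fin N × Fin N) ℂ :=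
  Matrix.of fun p q => if p.1 = q.2 ∧ p.2 = q.1 then 1 else 0

/-- `ρ_R(U) = U_R U_R† / N²`. -/
def rhoR (N : ℕ) (U : Matrix (Fin N × Fin N) (Fin N × Fin N) ℂ) :
    Matrix (Fin N × Fin N) (Fin N × Fin N) ℂ :=
  ((N : ℂ) ^ 2)⁻¹ • (reshuffle N U * (reshuffle N U)ᴴ)

/-- `ρ_T(U) = S U_Γ U_Γ† S / N²`. -/
def rhoT (N : ℕ) (U : Matrix (Fin N × Fin N) (Fin N × Fin N) ℂ) :
    Matrix (Fin N × Fin N) (Fin N × Fin N) ℂ :=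
  ((N : ℂ) ^ 2)⁻¹ • (swapGate N * (ptransp N U * (ptransp N U)ᴴ) * swapGate N)

/-- Purity `X(U) = tr(ρ_R(U)²)` (a real number). -/
def Xpur (N : ℕ) (U : Matrix (Fin N × Fin N) (Fin N × Fin N) ℂ) : ℝ :=
  ((rhoR N U * rhoR N U).trace).re

/-- Purity `Y(U) = tr(ρ_T(U)²)` (a real number). -/
def Ypur (N : ℕ) (U : Matrix (Fin N × Fin N) (Fin N × Fin N) ℂ) : ℝ :=
  ((rhoT N U * rhoT N U).trace).re

/-- Entangling power `e_p(U)`. -/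
def ep (N : ℕ) (U : Matrix (Fin N × Fin N) (Fin N × Fin N) ℂ) : ℝ :=
  ((N : ℝ) ^ 2 / ((N : ℝ) + 1) ^ 2) *
    ((1 - Xpur N U) + (1 - Ypur N U) - ((N : ℝ) ^ 2 - 1) / (N : ℝ) ^ 2)

/-- Gate typicality `g_t(U)`. -/
def gateTyp (N : ℕ) (U : Matrix (Fin N × Fin N) (Fin N × Fin N) ℂ) : ℝ :=
  ((N : ℝ) ^ 2 / ((N : ℝ) ^ 2 - 1)) *
    (Ypur N U - Xpur N U + ((N : ℝ) ^ 2 - 1) / (N : ℝ) ^ 2)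

/-- Mean entangling power over the Haar measure, `ē_p = (N-1)²/(N²+1)`. -/
def epBar (N : ℕ) : ℝ := ((N : ℝ) - 1) ^ 2 / ((N : ℝ) ^ 2 + 1)

/-- `iterGate U W k = U · W_{k-1} · U ⋯ W_0 · U`, i.e. `U^(k+1)` with `k` interlacing
local gates `W_0, …, W_{k-1}`. -/
def iterGate {D : Type*} [Fintype D] [DecidableEq D] (U : Matrix D D ℂ)
    (W : ℕ → Matrix D D ℂ) : ℕ → Matrix D D ℂ
  | 0 => U
  | k + 1 => U * W k * iterGate U W k

set_option linter.unusedSectionVars false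
set_option maxHeartbeats 1000000
namespace GtAux

def ssq {D : Type*} [Fintype D] (M : Matrix D D ℂ) : ℝ := ∑ p, ∑ q, Complex.normSq (M p q)

variable {N : ℕ}

lemma swap_mul_swap (N : ℕ) : swapGate N * swapGate N = 1 := by
  ext ⟨a, b⟩ ⟨c, d⟩
  simp only [Matrix.mul_apply, swapGate, Matrix.of_apply, Matrix.one_apply,
    Fintype.sum_prod_type, Prod.mk.injEq]
  simp only [ite_and]
  rw [Finset.sum_comm]
  simp [Finset.sum_ite_eq, Prod.ext_iff, eq_comm, and_comm]

lemma ssq_reshuffle (U : Matrix (Fin N × Fin N) (Fin N × Fin N) ℂ) :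
    ssq (reshuffle N U) = ssq U := by
  unfold ssq reshuffle
  simp only [Matrix.of_apply, Fintype.sum_prod_type]
  refine Finset.sum_congr rfl fun i _ => ?_
  rw [Finset.sum_comm]

lemma ssq_ptransp (U : Matrix (Fin N × Fin N) (Fin N × Fin N) ℂ) :
    ssq (ptransp N U) = ssq U := by
  unfold ssq ptransp
  simp only [Matrix.of_apply, Fintype.sum_prod_type]
  refine Eq.trans (Finset.sum_congr rfl fun p1 _ => Finset.sum_comm) ?_
  refine Eq.trans Finset.sum_comm ?_
  exact Finset.sum_congr rfl fun q1 _ => Finset.sum_comm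


lemma gram_apply {D : Type*} [Fintype D] (M : Matrix D D ℂ) (p q : D) :
    (M * Mᴴ) p q = ∑ k, M p k * (starRingEnd ℂ) (M q k) := by
  simp [Matrix.mul_apply, Matrix.conjTranspose_apply, mul_comm]

lemma gram_diag {D : Type*} [Fintype D] (M : Matrix D D ℂ) (p : D) :
    (M * Mᴴ) p p = ((∑ k, Complex.normSq (M p k) : ℝ) : ℂ) := by
  rw [gram_apply]; push_cast
  exact Finset.sum_congr rfl fun k _ => Complex.mul_conj _

lemma trace_gram {D : Type*} [Fintype D] (M : Matrix D D ℂ) :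
    (M * Mᴴ).trace = ((ssq M : ℝ) : ℂ) := by
  unfold ssq
  push_cast
  rw [Matrix.trace]
  exact Finset.sum_congr rfl fun p _ => by
    rw [Matrix.diag_apply, gram_diag]; push_cast; rfl

lemma gram_conj {D : Type*} [Fintype D] (M : Matrix D D ℂ) (p q : D) :
    (M * Mᴴ) q p = (starRingEnd ℂ) ((M * Mᴴ) p q) := by
  have h := Matrix.isHermitian_mul_conjTranspose_self M
  conv_lhs => rw [← h]
  simp [Matrix.conjTranspose_apply]

lemma trace_gram_sq {D : Type*} [Fintype D] (M : Matrix D D ℂ) :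
    ((M * Mᴴ) * (M * Mᴴ)).trace
      = ((∑ p, ∑ q, Complex.normSq ((M * Mᴴ) p q) : ℝ) : ℂ) := by
  push_cast
  rw [Matrix.trace]
  refine Finset.sum_congr rfl fun p _ => ?_
  rw [Matrix.diag_apply, Matrix.mul_apply]
  refine Finset.sum_congr rfl fun q _ => ?_
  rw [gram_conj M p q, Complex.mul_conj]

lemma ssq_of_gram_eq_one {D : Type*} [Fintype D] [DecidableEq D] {M : Matrix D D ℂ}
    (h : M * Mᴴ = 1) : ssq M = Fintype.card D := by
  have h2 := trace_gram M
  rw [h, Matrix.trace_one] at h2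
  exact_mod_cast h2.symm

lemma Xpur_eq (hN : N ≠ 0) (U : Matrix (Fin N × Fin N) (Fin N × Fin N) ℂ) :
    Xpur N U = (∑ p, ∑ q,
      Complex.normSq ((reshuffle N U * (reshuffle N U)ᴴ) p q)) / (N : ℝ) ^ 4 := by
  have hNC : (N : ℂ) ≠ 0 := Nat.cast_ne_zero.mpr hN
  have hNR : (N : ℝ) ≠ 0 := Nat.cast_ne_zero.mpr hN
  unfold Xpur rhoR
  set G := reshuffle N U * (reshuffle N U)ᴴ with hG
  have h1 : (((N:ℂ)^2)⁻¹ • G) * (((N:ℂ)^2)⁻¹ • G)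
      = ((((N:ℂ)^2)⁻¹ * ((N:ℂ)^2)⁻¹)) • (G * G) := by
    rw [Matrix.smul_mul, Matrix.mul_smul, smul_smul]
  rw [h1, Matrix.trace_smul, trace_gram_sq, smul_eq_mul]
  set Q : ℝ := ∑ p, ∑ q, Complex.normSq (G p q)
  have h2 : (((N:ℂ)^2)⁻¹ * ((N:ℂ)^2)⁻¹) * ((Q : ℝ) : ℂ) = ((Q / (N:ℝ)^4 : ℝ) : ℂ) := by
    push_cast
    field_simp
  rw [h2, Complex.ofReal_re]

lemma Ypur_eq (hN : N ≠ 0) (U : Matrix (Fin N × Fin N) (Fin N × Fin N) ℂ) :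
    Ypur N U = (∑ p, ∑ q,
      Complex.normSq ((ptransp N U * (ptransp N U)ᴴ) p q)) / (N : ℝ) ^ 4 := by
  have hNC : (N : ℂ) ≠ 0 := Nat.cast_ne_zero.mpr hN
  unfold Ypur rhoT
  set S := swapGate N with hSdef
  set G := ptransp N U * (ptransp N U)ᴴ with hG
  have hS := swap_mul_swap N
  have h1 : (((N:ℂ)^2)⁻¹ • (S * G * S)) * (((N:ℂ)^2)⁻¹ • (S * G * S))
      = ((((N:ℂ)^2)⁻¹ * ((N:ℂ)^2)⁻¹)) • ((S * G * S) * (S * G * S)) := by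
    rw [Matrix.smul_mul, Matrix.mul_smul, smul_smul]
  have h2 : (S * G * S) * (S * G * S) = S * ((G * G) * S) := by
    calc (S * G * S) * (S * G * S) = S * (G * ((S * S) * (G * S))) := by
          simp only [Matrix.mul_assoc]
      _ = S * ((G * G) * S) := by rw [hS, one_mul]; simp only [Matrix.mul_assoc]
  have h3 : (S * ((G * G) * S)).trace = (G * G).trace := by
    rw [Matrix.trace_mul_comm, Matrix.mul_assoc, hS, mul_one]
  rw [h1, h2, Matrix.trace_smul, h3, trace_gram_sq, smul_eq_mul]
  set Q : ℝ := ∑ p, ∑ q, Complex.normSq (G p q)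
  have h4 : (((N:ℂ)^2)⁻¹ * ((N:ℂ)^2)⁻¹) * ((Q : ℝ) : ℂ) = ((Q / (N:ℝ)^4 : ℝ) : ℂ) := by
    push_cast
    field_simp
  rw [h4, Complex.ofReal_re]

lemma sum_normSq_one {D : Type*} [Fintype D] [DecidableEq D] :
    ∑ p : D, ∑ q : D, Complex.normSq ((1 : Matrix D D ℂ) p q) = Fintype.card D := by
  simp [Matrix.one_apply, apply_ite Complex.normSq]


lemma kron_conjTranspose {m n : Type*} (A : Matrix m m ℂ) (B : Matrix n n ℂ) :
    (A ⊗ₖ B)ᴴ = Aᴴ ⊗ₖ Bᴴ := by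
  ext ⟨i, α⟩ ⟨j, β⟩
  simp [Matrix.conjTranspose_apply, Matrix.kroneckerMap_apply]

lemma kron_gram {m n : Type*} [Fintype m] [Fintype n]
    (A : Matrix m m ℂ) (B : Matrix n n ℂ) :
    (A ⊗ₖ B) * (A ⊗ₖ B)ᴴ = (A * Aᴴ) ⊗ₖ (B * Bᴴ) := by
  rw [kron_conjTranspose, Matrix.mul_kronecker_mul]

lemma gram_outer {D : Type*} [Fintype D] (a b : D → ℂ) (M : Matrix D D ℂ)
    (hM : ∀ p q, M p q = a p * b q) :
    ∑ p, ∑ q, Complex.normSq ((M * Mᴴ) p q)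
      = (∑ p, Complex.normSq (a p)) ^ 2 * (∑ q, Complex.normSq (b q)) ^ 2 := by
  set s : ℝ := ∑ r, Complex.normSq (b r) with hs
  have hG : ∀ p q, (M * Mᴴ) p q = (a p * (starRingEnd ℂ) (a q)) * ((s : ℝ) : ℂ) := by
    intro p q
    rw [gram_apply]
    have e1 : ∀ k, M p k * (starRingEnd ℂ) (M q k)
        = (a p * (starRingEnd ℂ) (a q)) * (b k * (starRingEnd ℂ) (b k)) := by
      intro k; rw [hM, hM]; simp only [_root_.map_mul]; ring
    simp only [e1]
    rw [← Finset.mul_sum]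
    congr 1
    rw [hs]; push_cast
    exact Finset.sum_congr rfl fun k _ => Complex.mul_conj _
  have hnorm : ∀ p q, Complex.normSq ((M * Mᴴ) p q)
      = Complex.normSq (a p) * Complex.normSq (a q) * (s * s) := by
    intro p q
    rw [hG, _root_.map_mul, _root_.map_mul, Complex.normSq_conj, Complex.normSq_ofReal]
  simp only [hnorm]
  have e : ∀ p, ∑ q, Complex.normSq (a p) * Complex.normSq (a q) * (s * s)
      = (Complex.normSq (a p) * (s * s)) * ∑ q, Complex.normSq (a q) := by
    intro p
    refine Eq.trans ?_ (Finset.mul_sum _ _ _).symm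
    exact Finset.sum_congr rfl fun q _ => by ring
  simp only [e]
  rw [← Finset.sum_mul, ← Finset.sum_mul]
  ring

lemma ssq_prod_fst {N : ℕ} (A : Matrix (Fin N) (Fin N) ℂ) :
    ∑ p : Fin N × Fin N, Complex.normSq (A p.1 p.2) = ssq A := by
  rw [Fintype.sum_prod_type]; rfl

lemma ptransp_kron {N : ℕ} (A B : Matrix (Fin N) (Fin N) ℂ) :
    ptransp N (A ⊗ₖ B) = Aᵀ ⊗ₖ B := by
  ext ⟨i, α⟩ ⟨j, β⟩
  simp [ptransp, Matrix.kroneckerMap_apply, Matrix.transpose_apply]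


lemma ssq_nonneg {D : Type*} [Fintype D] (M : Matrix D D ℂ) : 0 ≤ ssq M :=
  Finset.sum_nonneg fun _ _ => Finset.sum_nonneg fun _ _ => Complex.normSq_nonneg _

lemma entry_cs {D : Type*} [Fintype D] (M : Matrix D D ℂ) (p q : D) :
    Complex.normSq ((M * Mᴴ) p q)
      ≤ (∑ k, Complex.normSq (M p k)) * (∑ k, Complex.normSq (M q k)) := by
  rw [gram_apply]
  calc Complex.normSq (∑ k, M p k * (starRingEnd ℂ) (M q k))
      = (‖∑ k, M p k * (starRingEnd ℂ) (M q k)‖) ^ 2 := (Complex.sq_norm _).symm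
    _ ≤ (∑ k, ‖M p k‖ * ‖M q k‖) ^ 2 := by
        apply pow_le_pow_left₀ (norm_nonneg _)
        refine le_trans (norm_sum_le _ _) (le_of_eq ?_)
        exact Finset.sum_congr rfl fun k _ => by simp [_root_.map_mul]
    _ ≤ (∑ k, ‖M p k‖ ^ 2) * (∑ k, ‖M q k‖ ^ 2) :=
        Finset.sum_mul_sq_le_sq_mul_sq _ _ _
    _ = (∑ k, Complex.normSq (M p k)) * (∑ k, Complex.normSq (M q k)) := by
        simp [Complex.sq_norm]

lemma gram_upper {D : Type*} [Fintype D] (M : Matrix D D ℂ) :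
    ∑ p, ∑ q, Complex.normSq ((M * Mᴴ) p q) ≤ (ssq M) ^ 2 := by
  have h : ∑ p, ∑ q, Complex.normSq ((M * Mᴴ) p q)
      ≤ ∑ p, ∑ q, ((∑ k, Complex.normSq (M p k)) * (∑ k, Complex.normSq (M q k))) :=
    Finset.sum_le_sum fun p _ => Finset.sum_le_sum fun q _ => entry_cs M p q
  refine h.trans (le_of_eq ?_)
  rw [sq]
  unfold ssq
  rw [Finset.sum_mul_sum]

lemma gram_lower {D : Type*} [Fintype D] (M : Matrix D D ℂ) :
    (ssq M) ^ 2 ≤ (Fintype.card D : ℝ) * ∑ p, ∑ q, Complex.normSq ((M * Mᴴ) p q) := by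
  have h1 : ∀ p, Complex.normSq ((M * Mᴴ) p p) = (∑ k, Complex.normSq (M p k)) ^ 2 := by
    intro p; rw [gram_diag, Complex.normSq_ofReal, sq]
  have h2 : (ssq M) ^ 2 ≤ (Fintype.card D : ℝ) *
      ∑ p, (∑ k, Complex.normSq (M p k)) ^ 2 := by
    have := sq_sum_le_card_mul_sum_sq
      (s := (Finset.univ : Finset D)) (f := fun p => ∑ k, Complex.normSq (M p k))
    simpa [ssq] using this
  refine h2.trans (mul_le_mul_of_nonneg_left ?_ (by positivity))
  refine Finset.sum_le_sum fun p _ => ?_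
  rw [← h1 p]
  exact Finset.single_le_sum (fun q _ => Complex.normSq_nonneg _) (Finset.mem_univ p)

lemma cs_eq {D : Type*} [Fintype D] {f g : D → ℂ} (hg : (∑ k, Complex.normSq (g k)) ≠ 0)
    (h : Complex.normSq (∑ k, f k * (starRingEnd ℂ) (g k))
        = (∑ k, Complex.normSq (f k)) * (∑ k, Complex.normSq (g k))) :
    ∃ c : ℂ, ∀ k, f k = c * g k := by
  set s : ℝ := ∑ k, Complex.normSq (g k) with hs
  set F : ℝ := ∑ k, Complex.normSq (f k) with hF
  set T : ℂ := ∑ k, f k * (starRingEnd ℂ) (g k) with hT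
  set c : ℂ := T / (s : ℂ) with hc
  have hsC : (s : ℂ) ≠ 0 := by exact_mod_cast hg
  have key : ∑ k, Complex.normSq (f k - c * g k) = 0 := by
    have e1 : ((∑ k, Complex.normSq (f k - c * g k) : ℝ) : ℂ)
        = ∑ k, (f k - c * g k) * (starRingEnd ℂ) (f k - c * g k) := by
      push_cast
      exact Finset.sum_congr rfl fun k _ => (Complex.mul_conj _).symm
    have each : ∀ k, (f k - c * g k) * (starRingEnd ℂ) (f k - c * g k)
        = f k * (starRingEnd ℂ) (f k)
          - (starRingEnd ℂ) c * (f k * (starRingEnd ℂ) (g k))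
          - c * ((starRingEnd ℂ) (f k) * g k)
          + (c * (starRingEnd ℂ) c) * (g k * (starRingEnd ℂ) (g k)) := by
      intro k; simp only [map_sub, _root_.map_mul]; ring
    have hFC : ((F : ℝ) : ℂ) = ∑ k, f k * (starRingEnd ℂ) (f k) := by
      rw [hF]; push_cast; exact Finset.sum_congr rfl fun k _ => (Complex.mul_conj _).symm
    have hsC2 : ((s : ℝ) : ℂ) = ∑ k, g k * (starRingEnd ℂ) (g k) := by
      rw [hs]; push_cast; exact Finset.sum_congr rfl fun k _ => (Complex.mul_conj _).symm
    have hTbar : (starRingEnd ℂ) T = ∑ k, (starRingEnd ℂ) (f k) * g k := by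
      rw [hT, map_sum]
      exact Finset.sum_congr rfl fun k _ => by
        simp only [_root_.map_mul, Complex.conj_conj]
    have e2 : ((∑ k, Complex.normSq (f k - c * g k) : ℝ) : ℂ)
        = (F : ℂ) - (starRingEnd ℂ) c * T - c * (starRingEnd ℂ) T
          + (c * (starRingEnd ℂ) c) * (s : ℂ) := by
      rw [e1]
      simp only [each, Finset.sum_add_distrib, Finset.sum_sub_distrib,
        ← Finset.mul_sum, ← hT, ← hTbar, ← hFC, ← hsC2]
    have hTT : T * (starRingEnd ℂ) T = ((F * s : ℝ) : ℂ) := by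
      rw [Complex.mul_conj, h]
    have hFs : ((F : ℝ) : ℂ) * ((s : ℝ) : ℂ) = T * (starRingEnd ℂ) T := by
      rw [hTT]; push_cast; ring
    have e3 : ((∑ k, Complex.normSq (f k - c * g k) : ℝ) : ℂ) = 0 := by
      rw [e2, hc, _root_.map_div₀, Complex.conj_ofReal]
      field_simp
      linear_combination hFs
    exact_mod_cast e3
  refine ⟨c, fun k => ?_⟩
  have h0 := (Finset.sum_eq_zero_iff_of_nonneg
    (fun k _ => Complex.normSq_nonneg (f k - c * g k))).mp key k (Finset.mem_univ k)
  have := Complex.normSq_eq_zero.mp h0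
  linear_combination this

lemma exists_rank_one {D : Type*} [Fintype D] {M : Matrix D D ℂ} (hs : ssq M ≠ 0)
    (heq : (∑ p, ∑ q, Complex.normSq ((M * Mᴴ) p q)) = (ssq M) ^ 2) :
    ∃ v w : D → ℂ, ∀ p q, M p q = v p * w q := by
  set u : D → ℝ := fun p => ∑ k, Complex.normSq (M p k) with hu
  have hterm : ∀ p q, Complex.normSq ((M * Mᴴ) p q) = u p * u q := by
    have hsum : ∑ p, ∑ q, (u p * u q - Complex.normSq ((M * Mᴴ) p q)) = 0 := by
      have e : ∑ p, ∑ q, u p * u q = (ssq M) ^ 2 := by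
        rw [sq]; unfold ssq; rw [Finset.sum_mul_sum]
      simp only [Finset.sum_sub_distrib]
      rw [e, heq, sub_self]
    have houter : ∀ p ∈ (Finset.univ : Finset D),
        0 ≤ ∑ q, (u p * u q - Complex.normSq ((M * Mᴴ) p q)) := fun p _ =>
      Finset.sum_nonneg fun q _ => sub_nonneg.mpr (entry_cs M p q)
    intro p q
    have h1 := (Finset.sum_eq_zero_iff_of_nonneg houter).mp hsum p (Finset.mem_univ p)
    have h2 := (Finset.sum_eq_zero_iff_of_nonneg
      (fun q _ => sub_nonneg.mpr (entry_cs M p q))).mp h1 q (Finset.mem_univ q)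
    linarith [h2]
  have hex : ∃ p₀, u p₀ ≠ 0 := by
    by_contra hcon
    push_neg at hcon
    apply hs
    unfold ssq
    exact Finset.sum_eq_zero fun p _ => hcon p
  obtain ⟨p₀, hp₀⟩ := hex
  have H : ∀ q, ∃ c : ℂ, ∀ k, M q k = c * M p₀ k := by
    intro q
    refine cs_eq hp₀ ?_
    have h3 := hterm q p₀
    rw [gram_apply] at h3
    exact h3
  choose v hv using H
  exact ⟨v, fun k => M p₀ k, fun p q => hv p q⟩

end GtAux

/-- For a unitary `U` on `ℂ^N ⊗ ℂ^N`, `0 ≤ g_t(U) ≤ 2`, and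
`g_t(U) = 0` iff `U` is a local gate `A ⊗ B`. -/
theorem gate_typicality_bounds_and_zero_iff_local (N : ℕ) (hN : 2 ≤ N)
    (U : Matrix (Fin N × Fin N) (Fin N × Fin N) ℂ)
    (hU : U ∈ Matrix.unitaryGroup (Fin N × Fin N) ℂ) :
    (0 ≤ gateTyp N U ∧ gateTyp N U ≤ 2) ∧
      (gateTyp N U = 0 ↔
        ∃ A B : Matrix (Fin N) (Fin N) ℂ,
          A ∈ Matrix.unitaryGroup (Fin N) ℂ ∧ B ∈ Matrix.unitaryGroup (Fin N) ℂ ∧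
            U = A ⊗ₖ B) := by
  classical
  have hN0 : N ≠ 0 := by omega
  have hNR : (2:ℝ) ≤ (N:ℝ) := by exact_mod_cast hN
  have hn2four : (4:ℝ) ≤ (N:ℝ)^2 := by nlinarith
  have hn2pos : (0:ℝ) < (N:ℝ)^2 := by nlinarith
  have hn2one : (1:ℝ) < (N:ℝ)^2 := by nlinarith
  have hn2ne : ((N:ℝ)^2) ≠ 0 := ne_of_gt hn2pos
  have hn21ne : ((N:ℝ)^2 - 1) ≠ 0 := by nlinarith
  have h4eq : (N:ℝ)^4 = ((N:ℝ)^2)^2 := by ring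
  have hcard : (Fintype.card (Fin N × Fin N) : ℝ) = (N:ℝ)^2 := by
    simp [Fintype.card_prod, Fintype.card_fin]; ring
  have hU1 : U * Uᴴ = 1 := by
    have h := (Matrix.mem_unitaryGroup_iff).mp hU
    rwa [Matrix.star_eq_conjTranspose] at h
  have hssqU : GtAux.ssq U = (N:ℝ)^2 := by
    rw [GtAux.ssq_of_gram_eq_one hU1, hcard]
  -- bounds for X
  have hssqR : GtAux.ssq (reshuffle N U) = (N:ℝ)^2 := by
    rw [GtAux.ssq_reshuffle]; exact hssqU
  have hssqP : GtAux.ssq (ptransp N U) = (N:ℝ)^2 := by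
    rw [GtAux.ssq_ptransp]; exact hssqU
  set QR : ℝ := ∑ p, ∑ q,
    Complex.normSq ((reshuffle N U * (reshuffle N U)ᴴ) p q) with hQRdef
  set QP : ℝ := ∑ p, ∑ q,
    Complex.normSq ((ptransp N U * (ptransp N U)ᴴ) p q) with hQPdef
  have hXeq : Xpur N U = QR / ((N:ℝ)^2)^2 := by
    rw [GtAux.Xpur_eq hN0, h4eq]
  have hYeq : Ypur N U = QP / ((N:ℝ)^2)^2 := by
    rw [GtAux.Ypur_eq hN0, h4eq]
  have hQRu : QR ≤ ((N:ℝ)^2)^2 := by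
    have := GtAux.gram_upper (reshuffle N U); rwa [hssqR] at this
  have hQRl : (N:ℝ)^2 ≤ QR := by
    have := GtAux.gram_lower (reshuffle N U)
    rw [hssqR, hcard] at this
    nlinarith
  have hQPu : QP ≤ ((N:ℝ)^2)^2 := by
    have := GtAux.gram_upper (ptransp N U); rwa [hssqP] at this
  have hQPl : (N:ℝ)^2 ≤ QP := by
    have := GtAux.gram_lower (ptransp N U)
    rw [hssqP, hcard] at this
    nlinarith
  have hX1 : Xpur N U ≤ 1 := by
    rw [hXeq, div_le_one (by positivity)]; exact hQRu
  have hX2 : 1/((N:ℝ)^2) ≤ Xpur N U := by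
    rw [hXeq, div_le_div_iff₀ hn2pos (by positivity)]
    nlinarith
  have hY1 : Ypur N U ≤ 1 := by
    rw [hYeq, div_le_one (by positivity)]; exact hQPu
  have hY2 : 1/((N:ℝ)^2) ≤ Ypur N U := by
    rw [hYeq, div_le_div_iff₀ hn2pos (by positivity)]
    nlinarith
  have hgt : gateTyp N U = ((N:ℝ)^2/((N:ℝ)^2-1)) *
      (Ypur N U - Xpur N U + ((N:ℝ)^2-1)/((N:ℝ)^2)) := rfl
  have hfac : (0:ℝ) < (N:ℝ)^2/((N:ℝ)^2-1) := by
    apply div_pos hn2pos; nlinarith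
  have hid0 : 1/((N:ℝ)^2) - 1 + ((N:ℝ)^2-1)/((N:ℝ)^2) = 0 := by
    field_simp; ring
  refine ⟨⟨?_, ?_⟩, ?_, ?_⟩
  · rw [hgt]
    apply mul_nonneg hfac.le
    linarith
  · rw [hgt]
    have h2e : Ypur N U - Xpur N U + ((N:ℝ)^2-1)/((N:ℝ)^2)
        ≤ 2*(((N:ℝ)^2-1)/((N:ℝ)^2)) := by
      have hid1 : ((N:ℝ)^2-1)/((N:ℝ)^2) = 1 - 1/((N:ℝ)^2) := by field_simp
      rw [hid1]
      linarith
    calc ((N:ℝ)^2/((N:ℝ)^2-1)) *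
        (Ypur N U - Xpur N U + ((N:ℝ)^2-1)/((N:ℝ)^2))
        ≤ ((N:ℝ)^2/((N:ℝ)^2-1)) * (2*(((N:ℝ)^2-1)/((N:ℝ)^2))) :=
          mul_le_mul_of_nonneg_left h2e hfac.le
      _ = 2 := by field_simp
  · -- forward: gateTyp = 0 → local
    intro h0
    have he : Ypur N U - Xpur N U + ((N:ℝ)^2-1)/((N:ℝ)^2) = 0 := by
      rw [hgt] at h0
      rcases mul_eq_zero.mp h0 with h | h
      · exact absurd h (ne_of_gt hfac)
      · exact h
    have hXone : Xpur N U = 1 := by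
      have hid1 : 1/((N:ℝ)^2) + ((N:ℝ)^2-1)/((N:ℝ)^2) = 1 := by field_simp; ring
      linarith
    have hQReq : QR = (GtAux.ssq (reshuffle N U))^2 := by
      rw [hssqR]
      rw [hXeq] at hXone
      field_simp at hXone
      linarith [hXone]
    obtain ⟨v, w, hvw⟩ := GtAux.exists_rank_one
      (M := reshuffle N U) (by rw [hssqR]; positivity) hQReq
    set A : Matrix (Fin N) (Fin N) ℂ := Matrix.of fun i j => v (i, j) with hAdef
    set B₀ : Matrix (Fin N) (Fin N) ℂ := Matrix.of fun α β => w (α, β) with hBdef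
    have hprod : U = A ⊗ₖ B₀ := by
      ext ⟨i, α⟩ ⟨j, β⟩
      have h := hvw (i, j) (α, β)
      simpa [reshuffle, Matrix.kroneckerMap_apply, hAdef, hBdef] using h
    have hkron : (A * Aᴴ) ⊗ₖ (B₀ * B₀ᴴ)
        = (1 : Matrix (Fin N × Fin N) (Fin N × Fin N) ℂ) := by
      rw [← GtAux.kron_gram, ← hprod]; exact hU1
    have hent : ∀ i j α β, (A * Aᴴ) i j * (B₀ * B₀ᴴ) α β
        = (1 : Matrix (Fin N × Fin N) (Fin N × Fin N) ℂ) (i, α) (j, β) := by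
      intro i j α β
      have h := congrFun (congrFun hkron (i, α)) (j, β)
      simpa [Matrix.kroneckerMap_apply] using h
    have i₀ : Fin N := ⟨0, by omega⟩
    set r : ℝ := ∑ k, Complex.normSq (B₀ i₀ k) with hrdef
    have hcB : (B₀ * B₀ᴴ) i₀ i₀ = ((r : ℝ) : ℂ) := GtAux.gram_diag B₀ i₀
    have h00 : (A * Aᴴ) i₀ i₀ * ((r : ℝ) : ℂ) = 1 := by
      have h := hent i₀ i₀ i₀ i₀
      rw [hcB] at h
      simpa [Matrix.one_apply] using h
    have hrCne : ((r : ℝ) : ℂ) ≠ 0 := by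
      intro hzero
      rw [hzero, mul_zero] at h00
      exact zero_ne_one h00
    have hrne : r ≠ 0 := fun hzero => hrCne (by rw [hzero]; simp)
    have hrpos : 0 < r :=
      lt_of_le_of_ne (Finset.sum_nonneg fun k _ => Complex.normSq_nonneg _) (Ne.symm hrne)
    have honeP : ∀ (i j : Fin N) (α β : Fin N),
        (1 : Matrix (Fin N × Fin N) (Fin N × Fin N) ℂ) (i, α) (j, β)
          = (if i = j then (1:ℂ) else 0) * (if α = β then (1:ℂ) else 0) := by
      intro i j α β
      by_cases h1 : i = j <;> by_cases h2 : α = β <;>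
        simp [Matrix.one_apply, Prod.ext_iff, h1, h2]
    have hPA : ∀ i j, (A * Aᴴ) i j = ((r : ℝ) : ℂ)⁻¹ * (if i = j then (1:ℂ) else 0) := by
      intro i j
      have h := hent i j i₀ i₀
      rw [hcB, honeP] at h
      simp only [if_pos rfl, ↓reduceIte, mul_one] at h
      field_simp at h ⊢
      linear_combination h
    have hQB : ∀ α β, (B₀ * B₀ᴴ) α β = ((r : ℝ) : ℂ) * (if α = β then (1:ℂ) else 0) := by
      intro α β
      have h := hent i₀ i₀ α β
      rw [hPA i₀ i₀, honeP] at h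
      simp only [if_pos rfl, mul_one, one_mul] at h
      field_simp at h ⊢
      linear_combination h
    set t : ℝ := Real.sqrt r with htdef
    have htpos : 0 < t := Real.sqrt_pos.mpr hrpos
    have htne : ((t : ℝ) : ℂ) ≠ 0 := by
      simp only [ne_eq, Complex.ofReal_eq_zero]
      exact ne_of_gt htpos
    have ht2 : ((t : ℝ) : ℂ) * ((t : ℝ) : ℂ) = ((r : ℝ) : ℂ) := by
      rw [← Complex.ofReal_mul]
      norm_cast
      exact Real.mul_self_sqrt hrpos.le
    refine ⟨((t : ℝ) : ℂ) • A, (((t : ℝ) : ℂ))⁻¹ • B₀, ?_, ?_, ?_⟩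
    · rw [Matrix.mem_unitaryGroup_iff, Matrix.star_eq_conjTranspose]
      have hsm : (((t : ℝ) : ℂ) • A) * (((t : ℝ) : ℂ) • A)ᴴ
          = (((t : ℝ) : ℂ) * ((t : ℝ) : ℂ)) • (A * Aᴴ) := by
        rw [Matrix.conjTranspose_smul, Matrix.smul_mul, Matrix.mul_smul, smul_smul]
        congr 1
        rw [Complex.star_def, Complex.conj_ofReal]
      rw [hsm, ht2]
      ext i j
      rw [Matrix.smul_apply, hPA i j, Matrix.one_apply]
      rw [smul_eq_mul, ← mul_assoc, mul_inv_cancel₀ hrCne, one_mul]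
    · rw [Matrix.mem_unitaryGroup_iff, Matrix.star_eq_conjTranspose]
      have hsm : ((((t : ℝ) : ℂ))⁻¹ • B₀) * ((((t : ℝ) : ℂ))⁻¹ • B₀)ᴴ
          = ((((t : ℝ) : ℂ))⁻¹ * (((t : ℝ) : ℂ))⁻¹) • (B₀ * B₀ᴴ) := by
        rw [Matrix.conjTranspose_smul, Matrix.smul_mul, Matrix.mul_smul, smul_smul]
        congr 1
        rw [star_inv₀, Complex.star_def, Complex.conj_ofReal]
      rw [hsm]
      ext α β
      rw [Matrix.smul_apply, hQB α β, Matrix.one_apply]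
      rw [smul_eq_mul]
      rw [show ((((t : ℝ) : ℂ))⁻¹ * (((t : ℝ) : ℂ))⁻¹) = (((t : ℝ) : ℂ) * ((t : ℝ) : ℂ))⁻¹
        by rw [mul_inv]]
      rw [ht2, ← mul_assoc, inv_mul_cancel₀ hrCne, one_mul]
    · rw [hprod, Matrix.smul_kronecker, Matrix.kronecker_smul, smul_smul,
        mul_inv_cancel₀ htne, one_smul]
  · -- reverse: local → gateTyp = 0
    rintro ⟨A, B, hA, hB, rfl⟩
    have hA1 : A * Aᴴ = 1 := by
      have h := (Matrix.mem_unitaryGroup_iff).mp hA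
      rwa [Matrix.star_eq_conjTranspose] at h
    have hA2 : Aᴴ * A = 1 := by
      have h := (Matrix.mem_unitaryGroup_iff').mp hA
      rwa [Matrix.star_eq_conjTranspose] at h
    have hB1 : B * Bᴴ = 1 := by
      have h := (Matrix.mem_unitaryGroup_iff).mp hB
      rwa [Matrix.star_eq_conjTranspose] at h
    have hRentry : ∀ p q : Fin N × Fin N,
        reshuffle N (A ⊗ₖ B) p q = (fun p : Fin N × Fin N => A p.1 p.2) p *
          (fun q : Fin N × Fin N => B q.1 q.2) q := by
      intro p q
      simp [reshuffle, Matrix.kroneckerMap_apply]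
    have hssqA : GtAux.ssq A = (N:ℝ) := by
      rw [GtAux.ssq_of_gram_eq_one hA1, Fintype.card_fin]
    have hssqB : GtAux.ssq B = (N:ℝ) := by
      rw [GtAux.ssq_of_gram_eq_one hB1, Fintype.card_fin]
    have hQReqc : QR = ((N:ℝ)^2)^2 := by
      rw [hQRdef]
      rw [GtAux.gram_outer _ _ _ hRentry]
      rw [GtAux.ssq_prod_fst A, GtAux.ssq_prod_fst B, hssqA, hssqB]
      ring
    have hXone : Xpur N (A ⊗ₖ B) = 1 := by
      rw [hXeq, hQReqc, div_self (by positivity)]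
    have hAT : Aᵀ * (Aᵀ)ᴴ = 1 := by
      ext i j
      have h := congrFun (congrFun hA2 j) i
      simp only [Matrix.mul_apply, Matrix.conjTranspose_apply, Matrix.transpose_apply,
        Matrix.one_apply] at h ⊢
      have h2 : ∑ k, A k i * star (A k j)
          = if j = i then (1:ℂ) else 0 := by
        rw [← h]; exact Finset.sum_congr rfl fun k _ => mul_comm _ _
      rw [h2]
      by_cases hij : i = j
      · simp [hij]
      · simp [hij, Ne.symm hij]
    have hPT : ptransp N (A ⊗ₖ B) * (ptransp N (A ⊗ₖ B))ᴴ = 1 := by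
      rw [GtAux.ptransp_kron, GtAux.kron_gram, hAT, hB1, Matrix.one_kronecker_one]
    have hQPeqc : QP = (N:ℝ)^2 := by
      rw [hQPdef, hPT, GtAux.sum_normSq_one, hcard]
    have hYval : Ypur N (A ⊗ₖ B) = 1/((N:ℝ)^2) := by
      rw [hYeq, hQPeqc]
      field_simp
    rw [hgt, hXone, hYval]
    have : 1/((N:ℝ)^2) - 1 + ((N:ℝ)^2-1)/((N:ℝ)^2) = 0 := hid0
    rw [this, mul_zero]
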